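/- Vector-valued version of the Bellman recursion: for data $g_1,\dots,g_n \in \mathbb{R}^C$ and $\gamma > 0$, let $P_r$ be the minimal value of $u \mapsto \sum_{i=1}^r \|u_i - g_i\|^2 + \gamma\,\#\{i<r : u_i \neq u_{i+1}\}$ over $u \in (\mathbb{R}^C)^r$, with $P_0 = -\gamma$. Then $P_r = \min_{1\le l \le r}\big(P_{l-1} + \gamma + \sum_{i=l}^r \|g_i - \mu_{l:r}\|^2\big)$ where $\mu_{l:r} \in \mathbb{R}^C$ is the componentwise mean of $g_l,\dots,g_r$. -/

import Mathlib

/-- Minimal value of the vector-valued univariate Potts problem on the prefix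
of length `r` of the data sequence `g : ℕ → ℝ^C`, with `P 0 = -γ`. -/
noncomputable def pottsValVec (C : ℕ) (γ : ℝ) (g : ℕ → Fin C → ℝ) : ℕ → ℝ
  | 0 => -γ
  | r + 1 => sInf { v : ℝ | ∃ u : ℕ → Fin C → ℝ, v =
      (∑ i ∈ Finset.range (r + 1), ∑ c, (u i c - g i c) ^ 2) +
        γ * ((Finset.range r).filter fun i => u i ≠ u (i + 1)).card }

namespace PottsAux

variable {C : ℕ} {γ : ℝ} {g : ℕ → Fin C → ℝ}

/-- The cost functional. -/
noncomputable def Ecost (C : ℕ) (γ : ℝ) (g : ℕ → Fin C → ℝ) (m : ℕ)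
    (u : ℕ → Fin C → ℝ) : ℝ :=
  (∑ i ∈ Finset.range (m + 1), ∑ c, (u i c - g i c) ^ 2) +
    γ * ((Finset.range m).filter fun i => u i ≠ u (i + 1)).card

lemma pv_succ (C : ℕ) (γ : ℝ) (g : ℕ → Fin C → ℝ) (m : ℕ) :
    pottsValVec C γ g (m + 1) = sInf { v : ℝ | ∃ u, v = Ecost C γ g m u } := rfl

lemma Ecost_nonneg (hγ : 0 < γ) (m : ℕ) (u : ℕ → Fin C → ℝ) :
    0 ≤ Ecost C γ g m u := by
  refine add_nonneg (Finset.sum_nonneg fun i _ => Finset.sum_nonneg fun c _ => sq_nonneg _) ?_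
  positivity

lemma bdd (hγ : 0 < γ) (m : ℕ) :
    BddBelow { v : ℝ | ∃ u, v = Ecost C γ g m u } :=
  ⟨0, fun _ ⟨u, hu⟩ => hu ▸ Ecost_nonneg hγ m u⟩

lemma pv_le (hγ : 0 < γ) (m : ℕ) (u : ℕ → Fin C → ℝ) :
    pottsValVec C γ g (m + 1) ≤ Ecost C γ g m u := by
  rw [pv_succ]; exact csInf_le (bdd hγ m) ⟨u, rfl⟩

/-- Mean minimizes the sum of squares. -/
lemma mean_min (b : ℕ → ℝ) (I : Finset ℕ) (hI : I.Nonempty) (a : ℝ) :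
    ∑ i ∈ I, (b i - (∑ j ∈ I, b j) / (I.card : ℝ)) ^ 2 ≤ ∑ i ∈ I, (a - b i) ^ 2 := by
  set n : ℝ := (I.card : ℝ) with hn
  set s : ℝ := ∑ j ∈ I, b j with hs
  have hn0 : (0:ℝ) < n := by rw [hn]; exact_mod_cast Finset.card_pos.mpr hI
  have h1 : ∑ i ∈ I, (b i - s / n) ^ 2 = (∑ i ∈ I, (b i)^2) - s^2/n := by
    have e : ∀ i ∈ I, (b i - s / n) ^ 2 = (b i)^2 - (2*s/n) * b i + (s/n)^2 := by
      intro i _; field_simp; ring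
    rw [Finset.sum_congr rfl e, Finset.sum_add_distrib, Finset.sum_sub_distrib,
      ← Finset.mul_sum, Finset.sum_const, nsmul_eq_mul, ← hs, ← hn]
    field_simp
    ring
  have h2 : ∑ i ∈ I, (a - b i) ^ 2 = n * a^2 - 2*a*s + ∑ i ∈ I, (b i)^2 := by
    have e : ∀ i ∈ I, (a - b i) ^ 2 = a^2 - (2*a) * b i + (b i)^2 := by
      intro i _; ring
    rw [Finset.sum_congr rfl e, Finset.sum_add_distrib, Finset.sum_sub_distrib,
      ← Finset.mul_sum, Finset.sum_const, nsmul_eq_mul, ← hs, ← hn]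
  rw [h1, h2]
  have key : 0 ≤ (n*a - s)^2 / n := div_nonneg (sq_nonneg _) hn0.le
  have e2 : (n*a - s)^2 / n = n*a^2 - 2*a*s + s^2/n := by field_simp; ring
  linarith

/-- Channel-wise version. -/
lemma mean_min_vec (g : ℕ → Fin C → ℝ) (I : Finset ℕ) (hI : I.Nonempty) (w : Fin C → ℝ) :
    ∑ i ∈ I, ∑ c, (g i c - (∑ j ∈ I, g j c) / (I.card : ℝ)) ^ 2 ≤
      ∑ i ∈ I, ∑ c, (w c - g i c) ^ 2 := by
  rw [Finset.sum_comm, Finset.sum_comm (s := I)]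
  exact Finset.sum_le_sum fun c _ => mean_min (fun i => g i c) I hI (w c)

/-- Constancy propagation. -/
lemma const_seg {α : Type*} (u : ℕ → α) (a b : ℕ)
    (h : ∀ i, a ≤ i → i < b → u i = u (i + 1)) :
    ∀ i, a ≤ i → i ≤ b → u i = u a := by
  intro i hai
  induction i, hai using Nat.le_induction with
  | base => intro _; rfl
  | succ n hn ih => intro hb; rw [← h n hn (by omega), ← ih (by omega)]

end PottsAux

open PottsAux in
theorem potts_bellman_recursion_vec (C : ℕ) (γ : ℝ) (hγ : 0 < γ)
    (g : ℕ → Fin C → ℝ) (r : ℕ) (hr : 1 ≤ r) :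
    pottsValVec C γ g r =
      (Finset.Icc 1 r).inf' (Finset.nonempty_Icc.mpr hr) fun l =>
        pottsValVec C γ g (l - 1) + γ +
          ∑ i ∈ Finset.Icc (l - 1) (r - 1), ∑ c,
            (g i c - (∑ j ∈ Finset.Icc (l - 1) (r - 1), g j c) / ((r - l + 1 : ℕ) : ℝ)) ^ 2 := by
  obtain ⟨m, rfl⟩ : ∃ m, r = m + 1 := ⟨r - 1, by omega⟩
  set F : ℕ → ℝ := fun l =>
      pottsValVec C γ g (l - 1) + γ +
        ∑ i ∈ Finset.Icc (l - 1) (m + 1 - 1), ∑ c,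
          (g i c - (∑ j ∈ Finset.Icc (l - 1) (m + 1 - 1), g j c) / ((m + 1 - l + 1 : ℕ) : ℝ)) ^ 2
    with hF
  have hne : (Finset.Icc 1 (m + 1)).Nonempty := Finset.nonempty_Icc.mpr hr
  -- denominators: for l ∈ [1, m+1], the Icc and its card
  have hIcc_card : ∀ l, 1 ≤ l → l ≤ m + 1 →
      ((m + 1 - l + 1 : ℕ) : ℝ) = ((Finset.Icc (l - 1) m).card : ℝ) := by
    intro l h1 h2
    rw [Nat.card_Icc]
    congr 1
    omega
  have hm1 : m + 1 - 1 = m := rfl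
  apply le_antisymm
  · -- sInf ≤ inf' : show sInf ≤ F l for every l
    apply Finset.le_inf'
    intro l hl
    rw [Finset.mem_Icc] at hl
    obtain ⟨hl1, hl2⟩ := hl
    obtain ⟨k, rfl⟩ : ∃ k, l = k + 1 := ⟨l - 1, by omega⟩
    have htail_ne : (Finset.Icc k m).Nonempty := Finset.nonempty_Icc.mpr (by omega)
    set μ : Fin C → ℝ := fun c => (∑ j ∈ Finset.Icc k m, g j c) / ((Finset.Icc k m).card : ℝ)
      with hμ
    have hc : ((m + 1 - (k + 1) + 1 : ℕ) : ℝ) = ((Finset.Icc k m).card : ℝ) := by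
      rw [Nat.card_Icc]; norm_cast; omega
    have hFval : F (k + 1) = pottsValVec C γ g k + γ +
        ∑ i ∈ Finset.Icc k m, ∑ c, (g i c - μ c) ^ 2 := by
      rw [hF]
      simp only [Nat.add_sub_cancel, hm1, hc, hμ]
    rw [hFval]
    cases k with
    | zero =>
      -- l = 1 : exhibit the constant-mean witness directly
      have : pottsValVec C γ g (m + 1) ≤ Ecost C γ g m (fun _ => μ) := pv_le hγ m _
      refine this.trans (le_of_eq ?_)
      show Ecost C γ g m (fun _ => μ) = pottsValVec C γ g 0 + γ + _
      have h0 : pottsValVec C γ g 0 = -γ := rfl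
      rw [h0, Ecost]
      have hfilter : ((Finset.range m).filter fun i : ℕ =>
          (fun _ : ℕ => μ) i ≠ (fun _ : ℕ => μ) (i + 1)) = ∅ := by
        apply Finset.filter_eq_empty_iff.mpr
        intro i _
        simp
      rw [hfilter]
      have hrange : Finset.range (m + 1) = Finset.Icc 0 m := by
        ext i; simp
      rw [hrange]
      have : ∀ i ∈ Finset.Icc 0 m, ∑ c, (μ c - g i c) ^ 2 = ∑ c, (g i c - μ c) ^ 2 := by
        intro i _
        exact Finset.sum_congr rfl fun c _ => by ring
      rw [Finset.sum_congr rfl this]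
      simp
    | succ k' =>
      -- l = k' + 2 : ε-argument
      apply le_of_forall_pos_le_add
      intro ε hε
      -- pick a near-optimal prefix
      have hlt : pottsValVec C γ g (k' + 1) < pottsValVec C γ g (k' + 1) + ε :=
        lt_add_of_pos_right _ hε
      rw [pv_succ] at hlt
      have hSne : { v : ℝ | ∃ u, v = Ecost C γ g k' u }.Nonempty := ⟨_, g, rfl⟩
      obtain ⟨v', ⟨u', hv'⟩, hv'lt⟩ :=
        (csInf_lt_iff (bdd hγ k') hSne).mp hlt
      subst hv'
      -- build the combined witness
      set u : ℕ → Fin C → ℝ := fun i => if i ≤ k' then u' i else μ with hu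
      have hle : pottsValVec C γ g (m + 1) ≤ Ecost C γ g m u := pv_le hγ m u
      refine hle.trans ?_
      -- bound Ecost m u
      have hsum_split :
          ∑ i ∈ Finset.range (m + 1), ∑ c, (u i c - g i c) ^ 2 =
            (∑ i ∈ Finset.range (k' + 1), ∑ c, (u' i c - g i c) ^ 2) +
              ∑ i ∈ Finset.Icc (k' + 1) m, ∑ c, (μ c - g i c) ^ 2 := by
        have e1 : Finset.range (m + 1) = Finset.range (k' + 1) ∪ Finset.Icc (k' + 1) m := by
          ext i; simp; omega
        have e2 : Disjoint (Finset.range (k' + 1)) (Finset.Icc (k' + 1) m) := by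
          rw [Finset.disjoint_left]; intro i hi hi'
          simp at hi hi'; omega
        rw [e1, Finset.sum_union e2]
        congr 1
        · refine Finset.sum_congr rfl fun i hi => ?_
          simp only [Finset.mem_range] at hi
          have : u i = u' i := by rw [hu]; simp [Nat.lt_succ_iff.mp hi]
          rw [this]
        · refine Finset.sum_congr rfl fun i hi => ?_
          simp only [Finset.mem_Icc] at hi
          have : u i = μ := by rw [hu]; simp [show ¬ i ≤ k' by omega]
          rw [this]
      have hjump : (((Finset.range m).filter fun i => u i ≠ u (i + 1)).card : ℝ) ≤
          (((Finset.range k').filter fun i => u' i ≠ u' (i + 1)).card : ℝ) + 1 := by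
        have hsub : ((Finset.range m).filter fun i => u i ≠ u (i + 1)) ⊆
            insert k' ((Finset.range k').filter fun i => u' i ≠ u' (i + 1)) := by
          intro i hi
          simp only [Finset.mem_filter, Finset.mem_range] at hi
          obtain ⟨him, hne'⟩ := hi
          rcases lt_trichotomy i k' with h | h | h
          · refine Finset.mem_insert_of_mem ?_
            simp only [Finset.mem_filter, Finset.mem_range]
            refine ⟨h, ?_⟩
            intro hcon
            apply hne'
            have e1 : u i = u' i := by rw [hu]; simp [h.le]
            have e2 : u (i + 1) = u' (i + 1) := by rw [hu]; simp [show i + 1 ≤ k' from h]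
            rw [e1, e2, hcon]
          · exact h ▸ Finset.mem_insert_self _ _
          · exfalso
            apply hne'
            have e1 : u i = μ := by rw [hu]; simp [show ¬ i ≤ k' by omega]
            have e2 : u (i + 1) = μ := by rw [hu]; simp [show ¬ i + 1 ≤ k' by omega]
            rw [e1, e2]
        calc (((Finset.range m).filter fun i => u i ≠ u (i + 1)).card : ℝ)
            ≤ ((insert k' ((Finset.range k').filter fun i => u' i ≠ u' (i + 1))).card : ℝ) := by
              exact_mod_cast Finset.card_le_card hsub
          _ ≤ _ := by
              exact_mod_cast Finset.card_insert_le _ _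
      have htail : ∑ i ∈ Finset.Icc (k' + 1) m, ∑ c, (μ c - g i c) ^ 2 =
          ∑ i ∈ Finset.Icc (k' + 1) m, ∑ c, (g i c - μ c) ^ 2 :=
        Finset.sum_congr rfl fun i _ => Finset.sum_congr rfl fun c _ => by ring
      have : Ecost C γ g m u ≤ Ecost C γ g k' u' + γ +
          ∑ i ∈ Finset.Icc (k' + 1) m, ∑ c, (g i c - μ c) ^ 2 := by
        rw [Ecost, Ecost, hsum_split, htail]
        have := mul_le_mul_of_nonneg_left hjump hγ.le
        linarith
      refine this.trans ?_
      have : Ecost C γ g k' u' ≤ pottsValVec C γ g (k' + 1) + ε := by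
        rw [pv_succ]; exact hv'lt.le
      linarith
  · -- inf' ≤ sInf : every element of the set dominates some F l
    rw [pv_succ]
    refine le_csInf ⟨Ecost C γ g m g, g, rfl⟩ ?_
    rintro v ⟨u, rfl⟩
    set J := (Finset.range m).filter fun i => u i ≠ u (i + 1) with hJ
    by_cases hJe : J = ∅
    · -- no jumps: use l = 1
      have hconst : ∀ i, 0 ≤ i → i ≤ m → u i = u 0 := by
        apply const_seg
        intro i _ him
        by_contra hne'
        have : i ∈ J := by
          rw [hJ]; simp only [Finset.mem_filter, Finset.mem_range]
          exact ⟨him, hne'⟩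
        rw [hJe] at this; simp at this
      have hmem : (1 : ℕ) ∈ Finset.Icc 1 (m + 1) := by rw [Finset.mem_Icc]; omega
      refine le_trans (Finset.inf'_le _ hmem) ?_
      have hrange : Finset.range (m + 1) = Finset.Icc 0 m := by
        ext i; simp
      have hcard : ((m + 1 - 1 + 1 : ℕ) : ℝ) = ((Finset.Icc 0 m).card : ℝ) :=
        hIcc_card 1 le_rfl (by omega)
      have hF1 : F 1 = -γ + γ + ∑ i ∈ Finset.Icc 0 m, ∑ c,
          (g i c - (∑ j ∈ Finset.Icc 0 m, g j c) / ((Finset.Icc 0 m).card : ℝ)) ^ 2 := by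
        rw [hF]
        have hcard2 : ((m + 1 : ℕ) : ℝ) = ((Finset.Icc 0 m).card : ℝ) := by
          simp [Nat.card_Icc]
        simp only [Nat.sub_self, hm1, show pottsValVec C γ g 0 = -γ from rfl]
        rw [hcard2]
      rw [hF1]
      have hEu : Ecost C γ g m u =
          (∑ i ∈ Finset.Icc 0 m, ∑ c, (u i c - g i c) ^ 2) + γ * J.card := by
        rw [Ecost, hrange, hJ]
      rw [hEu, hJe]
      have hub : ∑ i ∈ Finset.Icc 0 m, ∑ c,
            (g i c - (∑ j ∈ Finset.Icc 0 m, g j c) / ((Finset.Icc 0 m).card : ℝ)) ^ 2 ≤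
          ∑ i ∈ Finset.Icc 0 m, ∑ c, (u i c - g i c) ^ 2 := by
        have : ∑ i ∈ Finset.Icc 0 m, ∑ c, (u i c - g i c) ^ 2 =
            ∑ i ∈ Finset.Icc 0 m, ∑ c, (u 0 c - g i c) ^ 2 := by
          refine Finset.sum_congr rfl fun i hi => ?_
          simp only [Finset.mem_Icc] at hi
          rw [hconst i (by omega) hi.2]
        rw [this]
        exact mean_min_vec g _ (Finset.nonempty_Icc.mpr (by omega)) (u 0)
      simp only [Finset.card_empty, Nat.cast_zero, mul_zero, add_zero]
      linarith
    · -- there is a jump: use l = max J + 2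
      have hJne : J.Nonempty := Finset.nonempty_iff_ne_empty.mpr hJe
      set j := J.max' hJne with hj
      have hjJ : j ∈ J := J.max'_mem hJne
      have hjm : j < m ∧ u j ≠ u (j + 1) := by
        have := hjJ
        rw [hJ] at this
        simpa using this
      have hmem : j + 2 ∈ Finset.Icc 1 (m + 1) := by
        rw [Finset.mem_Icc]; omega
      refine le_trans (Finset.inf'_le _ hmem) ?_
      have hconst : ∀ i, j + 1 ≤ i → i ≤ m → u i = u (j + 1) := by
        apply const_seg
        intro i hji him
        by_contra hne'
        have hiJ : i ∈ J := by
          rw [hJ]; simp only [Finset.mem_filter, Finset.mem_range]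
          exact ⟨him, hne'⟩
        have := J.le_max' i hiJ
        omega
      -- simplify F (j + 2)
      have hcard : ((m + 1 - (j + 2) + 1 : ℕ) : ℝ) = ((Finset.Icc (j + 1) m).card : ℝ) :=
        hIcc_card (j + 2) (by omega) (by omega)
      have hred : j + 2 - 1 = j + 1 := rfl
      have hFj : F (j + 2) = pottsValVec C γ g (j + 1) + γ +
          ∑ i ∈ Finset.Icc (j + 1) m, ∑ c,
            (g i c - (∑ j' ∈ Finset.Icc (j + 1) m, g j' c) /
              ((Finset.Icc (j + 1) m).card : ℝ)) ^ 2 := by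
        rw [hF]
        simp only [hred, hm1, hcard]
      rw [hFj]
      -- prefix is in the (j)-set
      have hpre : pottsValVec C γ g (j + 1) ≤
          (∑ i ∈ Finset.range (j + 1), ∑ c, (u i c - g i c) ^ 2) +
            γ * ((Finset.range j).filter fun i => u i ≠ u (i + 1)).card :=
        pv_le hγ j u
      -- split sum
      have hsum_split :
          ∑ i ∈ Finset.range (m + 1), ∑ c, (u i c - g i c) ^ 2 =
            (∑ i ∈ Finset.range (j + 1), ∑ c, (u i c - g i c) ^ 2) +
              ∑ i ∈ Finset.Icc (j + 1) m, ∑ c, (u i c - g i c) ^ 2 := by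
        have e1 : Finset.range (m + 1) = Finset.range (j + 1) ∪ Finset.Icc (j + 1) m := by
          ext i; simp; omega
        have e2 : Disjoint (Finset.range (j + 1)) (Finset.Icc (j + 1) m) := by
          rw [Finset.disjoint_left]; intro i hi hi'
          simp at hi hi'; omega
        rw [e1, Finset.sum_union e2]
      -- jump count bound
      have hjump : (((Finset.range j).filter fun i => u i ≠ u (i + 1)).card : ℝ) + 1 ≤
          (J.card : ℝ) := by
        have hsub : insert j ((Finset.range j).filter fun i => u i ≠ u (i + 1)) ⊆ J := by
          intro i hi
          rcases Finset.mem_insert.mp hi with h | h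
          · exact h ▸ hjJ
          · simp only [Finset.mem_filter, Finset.mem_range] at h
            rw [hJ]; simp only [Finset.mem_filter, Finset.mem_range]
            exact ⟨by omega, h.2⟩
        have hnotmem : j ∉ (Finset.range j).filter fun i => u i ≠ u (i + 1) := by
          simp
        have := Finset.card_le_card hsub
        rw [Finset.card_insert_of_notMem hnotmem] at this
        exact_mod_cast this
      -- tail bound
      have htail : ∑ i ∈ Finset.Icc (j + 1) m, ∑ c,
            (g i c - (∑ j' ∈ Finset.Icc (j + 1) m, g j' c) /
              ((Finset.Icc (j + 1) m).card : ℝ)) ^ 2 ≤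
          ∑ i ∈ Finset.Icc (j + 1) m, ∑ c, (u i c - g i c) ^ 2 := by
        have e : ∑ i ∈ Finset.Icc (j + 1) m, ∑ c, (u i c - g i c) ^ 2 =
            ∑ i ∈ Finset.Icc (j + 1) m, ∑ c, (u (j + 1) c - g i c) ^ 2 := by
          refine Finset.sum_congr rfl fun i hi => ?_
          simp only [Finset.mem_Icc] at hi
          rw [hconst i hi.1 hi.2]
        rw [e]
        exact mean_min_vec g _ (Finset.nonempty_Icc.mpr (by omega)) (u (j + 1))
      rw [Ecost, hsum_split, ← hJ]
      have hγJ : γ * ((((Finset.range j).filter fun i => u i ≠ u (i + 1)).card : ℝ) + 1) ≤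
          γ * (J.card : ℝ) := mul_le_mul_of_nonneg_left hjump hγ.le
      linarith
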